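/- Let n ≥ 3 be an integer, let h satisfy hypotheses (H), let k ≥ 1 be an integer, and suppose h(r) ≤ C2 for all 0 ≤ r ≤ R, where C2 > 0. Then σ_(k)(g_h) ≤ λ_(k) C2^{n−3} R / h(0)^{n−1}. -/

import Mathlib

open MeasureTheory Set

/-- Hypotheses (H): `h` is smooth on `[0,R]`, positive on `[0,R)`, `h(R)=0`,
`h'(R) = -1`, and all even-order derivatives of `h` vanish at `R`. -/
def SatisfiesH (R : ℝ) (h : ℝ → ℝ) : Prop :=
  ContDiffOn ℝ (⊤ : ℕ∞) h (Set.Icc 0 R) ∧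
  (∀ r ∈ Set.Ico (0:ℝ) R, 0 < h r) ∧
  h R = 0 ∧
  derivWithin h (Set.Icc 0 R) R = -1 ∧
  ∀ k : ℕ, iteratedDerivWithin (2 * k) h (Set.Icc 0 R) R = 0

/-- The `k`-th distinct eigenvalue `λ_(k) = k (n + k - 2)` of the Laplacian on the
round unit sphere `S^{n-1}`. -/
noncomputable def sphereEig (n k : ℕ) : ℝ := (k : ℝ) * ((n : ℝ) + (k : ℝ) - 2)

/-- The Rayleigh quotient
`R_λ(a; h) = (∫₀^R ((a')² h^{n-1} + λ a² h^{n-3}))/(a(0)² h(0)^{n-1})`. -/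
noncomputable def rayleighQ (R : ℝ) (n : ℕ) (lam : ℝ) (h a : ℝ → ℝ) : ℝ :=
  (∫ r in (0:ℝ)..R,
      (deriv a r) ^ 2 * h r ^ ((n : ℤ) - 1) + lam * (a r) ^ 2 * h r ^ ((n : ℤ) - 3)) /
    ((a 0) ^ 2 * h 0 ^ ((n : ℤ) - 1))

/-- Admissible test functions: Lipschitz on `[0,R]`, vanishing at `R`, nonzero at `0`. -/
def IsAdmissible (R : ℝ) (a : ℝ → ℝ) : Prop :=
  (∃ K : NNReal, LipschitzOnWith K a (Set.Icc 0 R)) ∧ a R = 0 ∧ a 0 ≠ 0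

/-- The `k`-th distinct Steklov eigenvalue of the ball `[0,R] × S^{n-1}` with the
revolution metric `g_h`, characterized variationally. -/
noncomputable def steklov (R : ℝ) (n k : ℕ) (h : ℝ → ℝ) : ℝ :=
  sInf { v : ℝ | ∃ a : ℝ → ℝ, IsAdmissible R a ∧ v = rayleighQ R n (sphereEig n k) h a }

/-- `a` is a minimizer realizing `σ_(k)(g_h)`. -/
def IsMinimizer (R : ℝ) (n k : ℕ) (h a : ℝ → ℝ) : Prop :=
  IsAdmissible R a ∧ rayleighQ R n (sphereEig n k) h a = steklov R n k h

set_option maxHeartbeats 2000000 in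
theorem stmt_15 (n : ℕ) (hn : 3 ≤ n) (R : ℝ) (hR : 0 < R) (h : ℝ → ℝ)
    (hH : SatisfiesH R h) (k : ℕ) (hk : 1 ≤ k) (C2 : ℝ) (hC2 : 0 < C2)
    (hub : ∀ r ∈ Set.Icc (0:ℝ) R, h r ≤ C2) :
    steklov R n k h ≤ sphereEig n k * C2 ^ (n - 3) * R / (h 0) ^ (n - 1) := by
  obtain ⟨hsm, hpos, hR0, -, -⟩ := hH
  have h0pos : 0 < h 0 := hpos 0 ⟨le_refl _, hR⟩
  have hnonneg : ∀ r ∈ Set.Icc (0:ℝ) R, 0 ≤ h r := by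
    intro r hr
    rcases lt_or_eq_of_le hr.2 with hlt | heq
    · exact (hpos r ⟨hr.1, hlt⟩).le
    · rw [heq, hR0]
  have lamnn : 0 ≤ sphereEig n k := by
    have h1 : (1:ℝ) ≤ (k:ℝ) := by exact_mod_cast hk
    have h2 : (3:ℝ) ≤ (n:ℝ) := by exact_mod_cast hn
    simp only [sphereEig]
    nlinarith
  have e1 : ((n:ℤ) - 1) = ((n - 1 : ℕ) : ℤ) := by omega
  have e3 : ((n:ℤ) - 3) = ((n - 3 : ℕ) : ℤ) := by omega
  have hval : ∀ a : ℝ → ℝ, rayleighQ R n (sphereEig n k) h a =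
      (∫ r in (0:ℝ)..R,
        (deriv a r) ^ 2 * h r ^ (n-1) + sphereEig n k * (a r) ^ 2 * h r ^ (n-3)) /
      ((a 0) ^ 2 * h 0 ^ (n-1)) := by
    intro a
    simp only [rayleighQ, e1, e3, zpow_natCast]
  have hbdd : BddBelow { v : ℝ | ∃ a : ℝ → ℝ,
      IsAdmissible R a ∧ v = rayleighQ R n (sphereEig n k) h a } := by
    refine ⟨0, ?_⟩
    rintro v ⟨a, -, rfl⟩
    rw [hval]
    refine div_nonneg ?_ (mul_nonneg (sq_nonneg _) (pow_nonneg h0pos.le _))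
    refine intervalIntegral.integral_nonneg hR.le (fun u hu => ?_)
    exact add_nonneg (mul_nonneg (sq_nonneg _) (pow_nonneg (hnonneg u hu) _))
      (mul_nonneg (mul_nonneg lamnn (sq_nonneg _)) (pow_nonneg (hnonneg u hu) _))
  obtain ⟨B, hB⟩ := isCompact_Icc.exists_bound_of_continuousOn
    (hsm.continuousOn_derivWithin (uniqueDiffOn_Icc hR) (by exact_mod_cast le_top))
  set L : ℝ := max B 0 with hLdef
  have hL0 : 0 ≤ L := le_max_right _ _
  have hlin : ∀ r ∈ Set.Icc (0:ℝ) R, h r ≤ L * (R - r) := by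
    intro r hr
    have hd : DifferentiableOn ℝ h (Set.Icc 0 R) := hsm.differentiableOn (by simp)
    have hmv := (convex_Icc (0:ℝ) R).norm_image_sub_le_of_norm_derivWithin_le (C := L) hd
      (fun x hx => le_trans (hB x hx) (le_max_left B 0)) ⟨hR.le, le_refl R⟩ hr
    rw [hR0, sub_zero, Real.norm_eq_abs, Real.norm_eq_abs] at hmv
    have h1 : h r ≤ |h r| := le_abs_self _
    have h2 : |r - R| = R - r := by
      rw [abs_of_nonpos (by linarith [hr.2])]; ring
    rw [h2] at hmv
    linarith
  have key : ∀ δ : ℝ, 0 < δ →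
      steklov R n k h ≤ sphereEig n k * C2 ^ (n - 3) * R / (h 0) ^ (n - 1) + δ := by
    intro δ hδ
    set ε : ℝ := min R (min 1 (δ * h 0 ^ (n-1) / (L ^ (n-1) + 1))) with hεdef
    have hε : 0 < ε := by
      refine lt_min hR (lt_min one_pos ?_)
      positivity
    have hεR : ε ≤ R := min_le_left _ _
    have hε1 : ε ≤ 1 := le_trans (min_le_right _ _) (min_le_left _ _)
    have hεδ : ε ≤ δ * h 0 ^ (n-1) / (L ^ (n-1) + 1) :=
      le_trans (min_le_right _ _) (min_le_right _ _)
    set c : ℝ := R - ε with hcdef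
    have hc0 : 0 ≤ c := by simp only [hcdef]; linarith
    have hcR : c ≤ R := by simp only [hcdef]; linarith
    set a : ℝ → ℝ := fun r => min 1 ((R - r) / ε) with hadef
    have ha0 : a 0 = 1 := by
      simp only [hadef, sub_zero]
      exact min_eq_left (by rw [le_div_iff₀ hε]; linarith)
    have haR : a R = 0 := by
      simp only [hadef, sub_self, zero_div]
      exact min_eq_right (by norm_num)
    have halip : LipschitzWith (max 0 (Real.toNNReal (1/ε))) a := by
      refine LipschitzWith.min (LipschitzWith.const 1) ?_
      refine LipschitzWith.of_dist_le_mul (fun x y => ?_)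
      rw [Real.dist_eq, Real.dist_eq, div_sub_div_same]
      rw [Real.coe_toNNReal _ (by positivity)]
      have hh : (R - x) - (R - y) = -(x - y) := by ring
      rw [hh, abs_div, abs_neg, abs_of_pos hε]
      rw [div_eq_mul_inv, mul_comm, one_div]
    have hadm : IsAdmissible R a :=
      ⟨⟨max 0 (Real.toNNReal (1/ε)), halip.lipschitzOnWith⟩, haR, by rw [ha0]; norm_num⟩
    have hda1 : ∀ r, r < c → deriv a r = 0 := by
      intro r hr
      have heq : a =ᶠ[nhds r] fun _ => (1:ℝ) := by
        filter_upwards [Iio_mem_nhds hr] with s hs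
        simp only [hadef]
        refine min_eq_left ?_
        rw [le_div_iff₀ hε]
        simp only [Set.mem_Iio, hcdef] at hs
        linarith
      rw [heq.deriv_eq, deriv_const]
    have hda2 : ∀ r, c < r → deriv a r = -1 / ε := by
      intro r hr
      have heq : a =ᶠ[nhds r] fun s => (R - s) / ε := by
        filter_upwards [Ioi_mem_nhds hr] with s hs
        simp only [hadef]
        refine min_eq_right ?_
        rw [div_le_iff₀ hε]
        simp only [Set.mem_Ioi, hcdef] at hs
        linarith
      rw [heq.deriv_eq]
      exact (((hasDerivAt_id r).const_sub R).div_const ε).deriv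
    have habd : ∀ r ∈ Set.Icc (0:ℝ) R, (a r) ^ 2 ≤ 1 := by
      intro r hr
      have h1 : a r ≤ 1 := min_le_left _ _
      have h2 : 0 ≤ a r := le_min one_pos.le (by
        apply div_nonneg _ hε.le; linarith [hr.2])
      nlinarith
    set f : ℝ → ℝ := fun r =>
      (deriv a r) ^ 2 * h r ^ (n-1) + sphereEig n k * (a r) ^ 2 * h r ^ (n-3) with hfdef
    have hfnn : ∀ r ∈ Set.Icc (0:ℝ) R, 0 ≤ f r := fun u hu =>
      add_nonneg (mul_nonneg (sq_nonneg _) (pow_nonneg (hnonneg u hu) _))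
        (mul_nonneg (mul_nonneg lamnn (sq_nonneg _)) (pow_nonneg (hnonneg u hu) _))
    set M1 : ℝ := sphereEig n k * C2 ^ (n-3) with hM1
    have hM1nn : 0 ≤ M1 := mul_nonneg lamnn (pow_nonneg hC2.le _)
    set M : ℝ := L ^ (n-1) + M1 with hM
    have hMnn : 0 ≤ M := add_nonneg (pow_nonneg hL0 _) hM1nn
    have ht2 : ∀ r ∈ Set.Icc (0:ℝ) R, sphereEig n k * (a r) ^ 2 * h r ^ (n-3) ≤ M1 := by
      intro r hr
      have hh3 : h r ^ (n-3) ≤ C2 ^ (n-3) := pow_le_pow_left₀ (hnonneg r hr) (hub r hr) _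
      have hh3' : 0 ≤ h r ^ (n-3) := pow_nonneg (hnonneg r hr) _
      have hab2 := habd r hr
      have hab2' : (0:ℝ) ≤ (a r) ^ 2 := sq_nonneg _
      calc sphereEig n k * (a r) ^ 2 * h r ^ (n-3) ≤ sphereEig n k * 1 * C2 ^ (n-3) := by
            apply mul_le_mul _ hh3 hh3' (by positivity)
            nlinarith
        _ = M1 := by rw [hM1]; ring
    have ht1 : ∀ r ∈ Set.Ioc c R, (deriv a r) ^ 2 * h r ^ (n-1) ≤ L ^ (n-1) := by
      intro r hr
      have hrIcc : r ∈ Set.Icc (0:ℝ) R := ⟨le_trans hc0 hr.1.le, hr.2⟩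
      rw [hda2 r hr.1]
      have hhr : h r ≤ L * ε := by
        have hl := hlin r hrIcc
        have hRr : R - r ≤ ε := by
          have := hr.1; simp only [hcdef] at this; linarith
        nlinarith [hnonneg r hrIcc]
      have hpow : h r ^ (n-1) ≤ (L * ε) ^ (n-1) := pow_le_pow_left₀ (hnonneg r hrIcc) hhr _
      have hsp : (n - 1) = (n - 3) + 2 := by omega
      have heq : (-1/ε) ^ 2 * (L * ε) ^ (n-1) = L ^ (n-1) * ε ^ (n-3) := by
        rw [mul_pow, hsp, pow_add]
        field_simp
        ring
      calc (-1/ε) ^ 2 * h r ^ (n-1) ≤ (-1/ε) ^ 2 * (L * ε) ^ (n-1) :=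
            mul_le_mul_of_nonneg_left hpow (sq_nonneg _)
        _ = L ^ (n-1) * ε ^ (n-3) := heq
        _ ≤ L ^ (n-1) * 1 :=
            mul_le_mul_of_nonneg_left (pow_le_one₀ hε.le hε1) (pow_nonneg hL0 _)
        _ = L ^ (n-1) := mul_one _
    -- pointwise bound away from c
    have hptw : ∀ r ∈ Set.Ioc (0:ℝ) R, r ≠ c → ‖f r‖ ≤ M := by
      intro r hr hne
      have hrIcc : r ∈ Set.Icc (0:ℝ) R := ⟨hr.1.le, hr.2⟩
      rw [Real.norm_eq_abs, abs_of_nonneg (hfnn r hrIcc)]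
      show (deriv a r) ^ 2 * h r ^ (n-1) + sphereEig n k * (a r) ^ 2 * h r ^ (n-3) ≤ M
      rw [hM]
      rcases lt_or_gt_of_ne hne with hlt | hgt
      · rw [hda1 r hlt]
        have e0 : (0:ℝ) ^ 2 * h r ^ (n-1) = 0 := by ring
        rw [e0]
        have hLn : (0:ℝ) ≤ L ^ (n-1) := pow_nonneg hL0 _
        linarith [ht2 r hrIcc]
      · exact add_le_add (ht1 r ⟨hgt, hr.2⟩) (ht2 r hrIcc)
    have hae_ne : ∀ᵐ r : ℝ ∂volume, r ≠ c := by
      rw [MeasureTheory.ae_iff]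
      simp only [not_not, Set.setOf_eq_eq_singleton]
      exact Real.volume_singleton
    have hmeasf : AEStronglyMeasurable f (volume.restrict (Set.Ioc 0 R)) := by
      have hh : AEStronglyMeasurable h (volume.restrict (Set.Ioc 0 R)) :=
        ((hsm.continuousOn.mono Set.Ioc_subset_Icc_self).aestronglyMeasurable measurableSet_Ioc)
      have hd : AEStronglyMeasurable (deriv a) (volume.restrict (Set.Ioc 0 R)) :=
        (measurable_deriv a).aestronglyMeasurable.restrict
      have ha' : AEStronglyMeasurable a (volume.restrict (Set.Ioc 0 R)) :=
        halip.continuous.aestronglyMeasurable.restrict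
      exact ((hd.pow 2).mul (hh.pow _)).add
        ((aestronglyMeasurable_const.mul (ha'.pow 2)).mul (hh.pow _))
    haveI hfinI : IsFiniteMeasure (volume.restrict (Set.Ioc (0:ℝ) R)) := by
      constructor
      rw [Measure.restrict_apply_univ, Real.volume_Ioc]
      exact ENNReal.ofReal_lt_top
    have hint : IntegrableOn f (Set.Ioc 0 R) := by
      refine ⟨hmeasf, HasFiniteIntegral.of_bounded (C := M) ?_⟩
      filter_upwards [ae_restrict_of_ae hae_ne, ae_restrict_mem measurableSet_Ioc] with r hne hrm
      exact hptw r hrm hne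
    have hsub1 : Set.Ioc (0:ℝ) c ⊆ Set.Ioc 0 R := Set.Ioc_subset_Ioc_right hcR
    have hsub2 : Set.Ioc c R ⊆ Set.Ioc (0:ℝ) R := Set.Ioc_subset_Ioc_left hc0
    have hsplit2 : ∫ r in Set.Ioc (0:ℝ) R, f r =
        (∫ r in Set.Ioc (0:ℝ) c, f r) + ∫ r in Set.Ioc c R, f r := by
      rw [← Set.Ioc_union_Ioc_eq_Ioc hc0 hcR]
      exact MeasureTheory.setIntegral_union (Set.Ioc_disjoint_Ioc_of_le le_rfl) measurableSet_Ioc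
        (hint.mono_set hsub1) (hint.mono_set hsub2)
    have b1 : (∫ r in Set.Ioc (0:ℝ) c, f r) ≤ M1 * c := by
      have hb := norm_setIntegral_le_of_norm_le_const_ae' (μ := volume)
        (s := Set.Ioc (0:ℝ) c) (f := f)
        (by rw [Real.volume_Ioc]; exact ENNReal.ofReal_lt_top)
        (C := M1) ?_
      · calc (∫ r in Set.Ioc (0:ℝ) c, f r) ≤ ‖∫ r in Set.Ioc (0:ℝ) c, f r‖ := le_abs_self _
          _ ≤ M1 * (volume (Set.Ioc (0:ℝ) c)).toReal := hb
          _ = M1 * c := by rw [Real.volume_Ioc, ENNReal.toReal_ofReal (by linarith)]; ring_nf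
      · filter_upwards [hae_ne] with r hne hrm
        have hrIcc : r ∈ Set.Icc (0:ℝ) R := ⟨hrm.1.le, le_trans hrm.2 hcR⟩
        have hlt : r < c := lt_of_le_of_ne hrm.2 hne
        rw [Real.norm_eq_abs, abs_of_nonneg (hfnn r hrIcc)]
        show (deriv a r) ^ 2 * h r ^ (n-1) + sphereEig n k * (a r) ^ 2 * h r ^ (n-3) ≤ M1
        rw [hda1 r hlt]
        have e0 : (0:ℝ) ^ 2 * h r ^ (n-1) = 0 := by ring
        rw [e0]
        linarith [ht2 r hrIcc]
    have b2 : (∫ r in Set.Ioc c R, f r) ≤ M * ε := by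
      have hb := norm_setIntegral_le_of_norm_le_const (μ := volume)
        (s := Set.Ioc c R) (f := f)
        (by rw [Real.volume_Ioc]; exact ENNReal.ofReal_lt_top)
        (C := M) (fun x hx => hptw x ⟨lt_of_le_of_lt hc0 hx.1, hx.2⟩ (ne_of_gt hx.1))
      calc (∫ r in Set.Ioc c R, f r) ≤ ‖∫ r in Set.Ioc c R, f r‖ := le_abs_self _
        _ ≤ M * (volume (Set.Ioc c R)).toReal := hb
        _ = M * ε := by
            rw [Real.volume_Ioc, ENNReal.toReal_ofReal (by linarith)]
            simp only [hcdef]; ring_nf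
    have hIbound : (∫ r in (0:ℝ)..R, f r) ≤ M1 * R + L ^ (n-1) * ε := by
      rw [intervalIntegral.integral_of_le hR.le, hsplit2]
      have heq2 : M1 * c + M * ε = M1 * R + L ^ (n-1) * ε := by
        simp only [hM, hcdef]; ring
      linarith [b1, b2]
    -- conclude
    have hstep : steklov R n k h ≤ rayleighQ R n (sphereEig n k) h a := by
      rw [steklov]
      exact csInf_le hbdd ⟨a, hadm, rfl⟩
    have hP : (0:ℝ) < h 0 ^ (n-1) := pow_pos h0pos _
    have hQδ : L ^ (n-1) * ε / h 0 ^ (n-1) ≤ δ := by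
      have h1 := (le_div_iff₀ (by positivity : (0:ℝ) < L ^ (n-1) + 1)).mp hεδ
      rw [div_le_iff₀ hP]
      nlinarith [hε.le]
    have hfin : rayleighQ R n (sphereEig n k) h a ≤
        sphereEig n k * C2 ^ (n - 3) * R / (h 0) ^ (n - 1) + δ := by
      rw [hval, ha0]
      have hnum : (∫ r in (0:ℝ)..R,
          (deriv a r) ^ 2 * h r ^ (n-1) + sphereEig n k * (a r) ^ 2 * h r ^ (n-3))
          ≤ M1 * R + L ^ (n-1) * ε := hIbound
      calc (∫ r in (0:ℝ)..R,
            (deriv a r) ^ 2 * h r ^ (n-1) + sphereEig n k * (a r) ^ 2 * h r ^ (n-3)) /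
            ((1:ℝ) ^ 2 * h 0 ^ (n-1))
          ≤ (M1 * R + L ^ (n-1) * ε) / ((1:ℝ) ^ 2 * h 0 ^ (n-1)) := by
            have hden : (0:ℝ) < (1:ℝ) ^ 2 * h 0 ^ (n-1) := by rw [one_pow, one_mul]; exact hP
            exact (div_le_div_iff_of_pos_right hden).mpr hnum
        _ = M1 * R / h 0 ^ (n-1) + L ^ (n-1) * ε / h 0 ^ (n-1) := by
            rw [one_pow, one_mul, add_div]
        _ ≤ sphereEig n k * C2 ^ (n - 3) * R / (h 0) ^ (n - 1) + δ := by
            rw [hM1]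
            exact (add_le_add_iff_left _).mpr hQδ
    exact le_trans hstep hfin
  exact le_of_forall_pos_le_add key
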